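/- arXiv:2311.18566 — 3 statements merged into one kernel-verified Lean document; each statement's English description precedes it below -/
import Mathlib

section
/- In particular, for m independent SWAP tests between the subsystems of ρ and the product state σ = ⊗_{i=1}^m |ψ_i⟩⟨ψ_i|, the probability that all m tests accept is 2^{-m} Σ_{S⊆[m]} Tr(ρ_S ⊗_{i∈S} |ψ_i⟩⟨ψ_i|), which is at most 2^{-m}(1 + Σ_{∅≠S⊆[m]} Tr(ρ_S ⊗_{i∈S}|ψ_i⟩⟨ψ_i|)) and hence at most 2^{-m} + max_{∅≠S} Tr(ρ_S ⊗_{i∈S}|ψ_i⟩⟨ψ_i|). -/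
open Matrix
open scoped ComplexOrder Kronecker
noncomputable section

/-- Square root of a matrix: the PSD square root if the matrix is PSD, else 0. -/
noncomputable def matSqrt {n : Type*} [Fintype n] [DecidableEq n]
    (A : Matrix n n ℂ) : Matrix n n ℂ :=
  open scoped Classical in
  if h : A.PosSemidef then
    (h.1.eigenvectorUnitary : Matrix n n ℂ) *
      diagonal ((↑) ∘ (√·) ∘ h.1.eigenvalues) *
      (star h.1.eigenvectorUnitary : Matrix n n ℂ)
  else 0

/-- Trace norm ‖A‖₁ = Tr √(AᴴA). -/
noncomputable def traceNorm {n : Type*} [Fintype n] [DecidableEq n]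
    (A : Matrix n n ℂ) : ℝ :=
  (Matrix.trace (matSqrt (Aᴴ * A))).re

/-- Trace distance TD(ρ,σ) = (1/2)‖ρ−σ‖₁. -/
noncomputable def TD {n : Type*} [Fintype n] [DecidableEq n]
    (ρ σ : Matrix n n ℂ) : ℝ :=
  traceNorm (ρ - σ) / 2

/-- Uhlmann fidelity F(ρ,σ) = (Tr √(√σ ρ √σ))². -/
noncomputable def fidelity {n : Type*} [Fintype n] [DecidableEq n]
    (ρ σ : Matrix n n ℂ) : ℝ :=
  ((Matrix.trace (matSqrt (matSqrt σ * ρ * matSqrt σ))).re) ^ 2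

/-- ρ is a density matrix: positive semidefinite with unit trace. -/
def IsDensity {n : Type*} [Fintype n] [DecidableEq n]
    (ρ : Matrix n n ℂ) : Prop :=
  ρ.PosSemidef ∧ ρ.trace = 1

variable {m d : ℕ}

/-- Merge an assignment on registers in `S` with one on registers outside `S`. -/
def mergeFn (S : Finset (Fin m)) (a : {i // i ∈ S} → Fin d)
    (c : {i // i ∉ S} → Fin d) : Fin m → Fin d :=
  fun i => if h : i ∈ S then a ⟨i, h⟩ else c ⟨i, h⟩

/-- Reduced state ρ_S: all registers outside `S` are traced out. -/
noncomputable def reduce (S : Finset (Fin m))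
    (ρ : Matrix (Fin m → Fin d) (Fin m → Fin d) ℂ) :
    Matrix ({i // i ∈ S} → Fin d) ({i // i ∈ S} → Fin d) ℂ :=
  Matrix.of fun a b => ∑ c : {i // i ∉ S} → Fin d,
    ρ (mergeFn S a c) (mergeFn S b c)

/-- The permutation of (A,B) register assignments that swaps A_i and B_i for
every i ∈ S. -/
def swapFn (S : Finset (Fin m))
    (p : (Fin m → Fin d) × (Fin m → Fin d)) :
    (Fin m → Fin d) × (Fin m → Fin d) :=
  (fun i => if i ∈ S then p.2 i else p.1 i,
   fun i => if i ∈ S then p.1 i else p.2 i)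

/-- The unitary SWAP_S swapping registers A_i ↔ B_i for i ∈ S. -/
noncomputable def swapMat (S : Finset (Fin m)) :
    Matrix ((Fin m → Fin d) × (Fin m → Fin d))
           ((Fin m → Fin d) × (Fin m → Fin d)) ℂ :=
  Matrix.of fun p q => if p = swapFn S q then 1 else 0

/-- The projector onto the all-accept outcome of m parallel SWAP tests between
A_i and B_i (i ∈ [m]); it equals ⊗_{i∈[m]} (I + SWAP_i)/2 = 2^{-m} Σ_S SWAP_S,
so the acceptance probability is its expectation in the tested state. -/
noncomputable def swapTestAcceptProj (m d : ℕ) :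
    Matrix ((Fin m → Fin d) × (Fin m → Fin d))
           ((Fin m → Fin d) × (Fin m → Fin d)) ℂ :=
  ((2 : ℂ) ^ m)⁻¹ • ∑ S : Finset (Fin m), swapMat S

/-- The product pure state ⊗_{i=1}^m |ψ_i⟩ as a vector on m registers. -/
def prodVec (ψ : Fin m → Fin d → ℂ) : (Fin m → Fin d) → ℂ :=
  fun a => ∏ i, ψ i (a i)

def splitE (S : Finset (Fin m)) :
    (Fin m → Fin d) ≃ ({i // i ∈ S} → Fin d) × ({i // i ∉ S} → Fin d) :=
  Equiv.piEquivPiSubtypeProd (· ∈ S) (fun _ => Fin d)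

lemma splitE_symm (S : Finset (Fin m)) (a : {i // i ∈ S} → Fin d)
    (c : {i // i ∉ S} → Fin d) : (splitE S).symm (a, c) = mergeFn S a c := rfl

lemma swapFn_merge (S : Finset (Fin m)) (a b : {i // i ∈ S} → Fin d)
    (c c' : {i // i ∉ S} → Fin d) :
    swapFn S (mergeFn S b c, mergeFn S a c') = (mergeFn S a c, mergeFn S b c') := by
  unfold swapFn mergeFn
  refine Prod.ext ?_ ?_ <;> funext i <;> by_cases h : i ∈ S <;> simp [h]

lemma trace_mul_expand {n : Type*} [Fintype n] (A B : Matrix n n ℂ) :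
    Matrix.trace (A * B) = ∑ i, ∑ j, A i j * B j i := by
  simp [Matrix.trace, Matrix.diag, Matrix.mul_apply]

lemma trace_swapMat_mul (S : Finset (Fin m))
    (X : Matrix ((Fin m → Fin d) × (Fin m → Fin d))
                ((Fin m → Fin d) × (Fin m → Fin d)) ℂ) :
    Matrix.trace (swapMat S * X) = ∑ q, X q (swapFn S q) := by
  rw [trace_mul_expand, Finset.sum_comm]
  simp [swapMat]

lemma key (S : Finset (Fin m)) (A : Matrix (Fin m → Fin d) (Fin m → Fin d) ℂ)
    (v : (Fin m → Fin d) → ℂ) :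
    Matrix.trace (swapMat S * (A ⊗ₖ Matrix.vecMulVec v (star v))) =
    Matrix.trace (reduce S A * reduce S (Matrix.vecMulVec v (star v))) := by
  rw [trace_swapMat_mul, trace_mul_expand]
  rw [Fintype.sum_prod_type]
  rw [← Equiv.sum_comp (splitE S).symm (g := fun q1 => ∑ q2,
        (A ⊗ₖ Matrix.vecMulVec v (star v)) (q1, q2) (swapFn S (q1, q2)))]
  refine Eq.trans (Finset.sum_congr rfl fun p _ =>
    (Equiv.sum_comp (splitE S).symm (fun q2 =>
        (A ⊗ₖ Matrix.vecMulVec v (star v)) ((splitE S).symm p, q2)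
          (swapFn S ((splitE S).symm p, q2)))).symm) ?_
  simp only [Fintype.sum_prod_type]
  simp only [splitE_symm, swapFn_merge, Matrix.kroneckerMap_apply,
    Matrix.vecMulVec_apply, reduce, Matrix.of_apply, Pi.star_apply, RCLike.star_def]
  have h1 : (∑ b : {i // i ∈ S} → Fin d, ∑ c : {i // i ∉ S} → Fin d,
      ∑ a : {i // i ∈ S} → Fin d, ∑ c' : {i // i ∉ S} → Fin d,
      A (mergeFn S b c) (mergeFn S a c) * (v (mergeFn S a c') * (starRingEnd ℂ) (v (mergeFn S b c'))))
      = ∑ b : {i // i ∈ S} → Fin d, ∑ a : {i // i ∈ S} → Fin d,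
      ∑ c : {i // i ∉ S} → Fin d, ∑ c' : {i // i ∉ S} → Fin d,
      A (mergeFn S b c) (mergeFn S a c) * (v (mergeFn S a c') * (starRingEnd ℂ) (v (mergeFn S b c'))) :=
    Finset.sum_congr rfl (fun b _ => Finset.sum_comm)
  rw [h1]
  simp_rw [Finset.sum_mul_sum]

lemma quad_nonneg (S : Finset (Fin m)) (A : Matrix (Fin m → Fin d) (Fin m → Fin d) ℂ)
    (hA : A.PosSemidef) (v : (Fin m → Fin d) → ℂ)
    (c c' : {i // i ∉ S} → Fin d) :
    0 ≤ (∑ a : {i // i ∈ S} → Fin d, ∑ b : {i // i ∈ S} → Fin d,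
      A (mergeFn S a c) (mergeFn S b c) *
        (v (mergeFn S b c') * (starRingEnd ℂ) (v (mergeFn S a c')))).re := by
  classical
  set u : (Fin m → Fin d) → ℂ := fun f =>
    if ((splitE S) f).2 = c then v (mergeFn S ((splitE S) f).1 c') else 0 with hu
  have hmem : ∀ (a : {i // i ∈ S} → Fin d) (cf : {i // i ∉ S} → Fin d),
      u (mergeFn S a cf) = if cf = c then v (mergeFn S a c') else 0 := by
    intro a cf
    rw [hu]
    simp only [← splitE_symm, Equiv.apply_symm_apply]
  have hform : (star u) ⬝ᵥ (A *ᵥ u) =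
      ∑ a : {i // i ∈ S} → Fin d, ∑ b : {i // i ∈ S} → Fin d,
      A (mergeFn S a c) (mergeFn S b c) *
        (v (mergeFn S b c') * (starRingEnd ℂ) (v (mergeFn S a c'))) := by
    rw [dotProduct]
    rw [← Equiv.sum_comp (splitE S).symm
      (g := fun f => star u f * (A *ᵥ u) f)]
    rw [Fintype.sum_prod_type]
    simp only [splitE_symm, Pi.star_apply, RCLike.star_def, mulVec, dotProduct]
    have inner : ∀ x : Fin m → Fin d, (∑ g : Fin m → Fin d, A x g * u g) =
        ∑ b : {i // i ∈ S} → Fin d, ∑ cg : {i // i ∉ S} → Fin d,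
          A x (mergeFn S b cg) * u (mergeFn S b cg) := by
      intro x
      rw [← Equiv.sum_comp (splitE S).symm (fun g => A x g * u g),
        Fintype.sum_prod_type]
      simp only [splitE_symm]
    simp_rw [inner]
    simp only [hmem]
    simp only [mul_ite, mul_zero, ite_mul, zero_mul, Finset.sum_ite_eq',
      Finset.mem_univ, if_true, apply_ite (starRingEnd ℂ), map_zero]
    refine Finset.sum_congr rfl fun a _ => ?_
    rw [Finset.mul_sum]
    refine Finset.sum_congr rfl fun b _ => ?_
    ring
  have h0 := hA.dotProduct_mulVec_nonneg u
  rw [hform] at h0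
  exact (Complex.le_def.mp h0).1

lemma sum4_swap {α β γ δ M : Type*} [Fintype α] [Fintype β] [Fintype γ] [Fintype δ]
    [AddCommMonoid M] (f : α → β → γ → δ → M) :
    ∑ a, ∑ b, ∑ c, ∑ e, f a b c e = ∑ c, ∑ e, ∑ a, ∑ b, f a b c e := by
  calc ∑ a, ∑ b, ∑ c, ∑ e, f a b c e
      = ∑ a, ∑ c, ∑ b, ∑ e, f a b c e :=
        Finset.sum_congr rfl fun a _ => Finset.sum_comm
    _ = ∑ a, ∑ c, ∑ e, ∑ b, f a b c e :=
        Finset.sum_congr rfl fun a _ => Finset.sum_congr rfl fun c _ => Finset.sum_comm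
    _ = ∑ c, ∑ a, ∑ e, ∑ b, f a b c e := Finset.sum_comm
    _ = ∑ c, ∑ e, ∑ a, ∑ b, f a b c e :=
        Finset.sum_congr rfl fun c _ => Finset.sum_comm

lemma trace_red_nonneg (S : Finset (Fin m))
    (A : Matrix (Fin m → Fin d) (Fin m → Fin d) ℂ) (hA : A.PosSemidef)
    (v : (Fin m → Fin d) → ℂ) :
    0 ≤ (Matrix.trace (reduce S A * reduce S (Matrix.vecMulVec v (star v)))).re := by
  rw [trace_mul_expand]
  simp only [reduce, Matrix.of_apply, Matrix.vecMulVec_apply, Pi.star_apply,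
    RCLike.star_def]
  simp_rw [Finset.sum_mul_sum]
  rw [sum4_swap (f := fun (a b : {i // i ∈ S} → Fin d) (c c' : {i // i ∉ S} → Fin d) =>
    A (mergeFn S a c) (mergeFn S b c) *
      (v (mergeFn S b c') * (starRingEnd ℂ) (v (mergeFn S a c'))))]
  rw [Complex.re_sum]
  refine Finset.sum_nonneg fun c _ => ?_
  rw [Complex.re_sum]
  exact Finset.sum_nonneg fun c' _ => quad_nonneg S A hA v c c'

def emptyE : ({i : Fin m // i ∉ (∅ : Finset (Fin m))} → Fin d) ≃ (Fin m → Fin d) :=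
  Equiv.arrowCongr (Equiv.subtypeUnivEquiv (fun i => Finset.notMem_empty i))
    (Equiv.refl (Fin d))

lemma trace_reduce_empty (A : Matrix (Fin m → Fin d) (Fin m → Fin d) ℂ)
    (B : Matrix (Fin m → Fin d) (Fin m → Fin d) ℂ) :
    Matrix.trace (reduce (∅ : Finset (Fin m)) A * reduce ∅ B) =
      Matrix.trace A * Matrix.trace B := by
  haveI : IsEmpty {i : Fin m // i ∈ (∅ : Finset (Fin m))} :=
    ⟨fun x => Finset.notMem_empty x.1 x.2⟩
  rw [trace_mul_expand]
  rw [Fintype.sum_unique]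
  rw [Fintype.sum_unique]
  have hmerge : ∀ (a : {i : Fin m // i ∈ (∅ : Finset (Fin m))} → Fin d)
      (c : {i : Fin m // i ∉ (∅ : Finset (Fin m))} → Fin d),
      mergeFn ∅ a c = emptyE c := by
    intro a c
    funext i
    simp [mergeFn, emptyE, Equiv.arrowCongr, Equiv.subtypeUnivEquiv]
  have hred : ∀ (C : Matrix (Fin m → Fin d) (Fin m → Fin d) ℂ)
      (a : {i : Fin m // i ∈ (∅ : Finset (Fin m))} → Fin d),
      reduce ∅ C a a = Matrix.trace C := by
    intro C a
    simp only [reduce, Matrix.of_apply, hmerge]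
    simpa [Matrix.trace, Matrix.diag] using
      Equiv.sum_comp (emptyE (m := m) (d := d)) (fun f => C f f)
  rw [hred, hred]

lemma trace_prodVec (ψ : Fin m → Fin d → ℂ) (hψ : ∀ i, ∑ j, ‖ψ i j‖ ^ 2 = 1) :
    Matrix.trace (Matrix.vecMulVec (prodVec ψ) (star (prodVec ψ))) = 1 := by
  rw [Matrix.trace]
  simp only [Matrix.diag, Matrix.vecMulVec_apply, Pi.star_apply, RCLike.star_def]
  have h1 : ∀ a : Fin m → Fin d, prodVec ψ a * (starRingEnd ℂ) (prodVec ψ a) =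
      ∏ i, ((‖ψ i (a i)‖ : ℂ) ^ 2) := by
    intro a
    rw [prodVec, map_prod, ← Finset.prod_mul_distrib]
    refine Finset.prod_congr rfl fun i _ => ?_
    rw [Complex.mul_conj, Complex.normSq_eq_norm_sq]
    push_cast
    ring
  simp_rw [h1]
  rw [← Fintype.piFinset_univ, ← Finset.prod_univ_sum (t := fun _ : Fin m => (Finset.univ : Finset (Fin d))) (f := fun i j => ((‖ψ i j‖ : ℂ) ^ 2))]
  have h2 : ∀ i : Fin m, (∑ j, ((‖ψ i j‖ : ℂ)) ^ 2) = 1 := by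
    intro i
    have h3 := hψ i
    exact_mod_cast h3
  simp [h2]

/-- for m parallel SWAP tests between the subsystems of ρ and the
product state σ = ⊗_i |ψ_i⟩⟨ψ_i|, the acceptance probability equals
2^{-m} Σ_{S⊆[m]} Tr(ρ_S σ_S), is at most 2^{-m}(1 + Σ_{∅≠S} Tr(ρ_S σ_S)), and
hence at most 2^{-m} + max_{∅≠S} Tr(ρ_S σ_S). -/
theorem parallel_swapTest_product_bound
    (m d : ℕ) (hm : 0 < m)
    (ρ : Matrix (Fin m → Fin d) (Fin m → Fin d) ℂ) (hρ : IsDensity ρ)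
    (ψ : Fin m → Fin d → ℂ) (hψ : ∀ i, ∑ j, ‖ψ i j‖ ^ 2 = 1) :
    (Matrix.trace (swapTestAcceptProj m d *
        (ρ ⊗ₖ Matrix.vecMulVec (prodVec ψ) (star (prodVec ψ))))).re =
      ((2 : ℝ) ^ m)⁻¹ * ∑ S : Finset (Fin m),
        (Matrix.trace (reduce S ρ *
          reduce S (Matrix.vecMulVec (prodVec ψ) (star (prodVec ψ))))).re ∧
    ((2 : ℝ) ^ m)⁻¹ * (∑ S : Finset (Fin m),
        (Matrix.trace (reduce S ρ *
          reduce S (Matrix.vecMulVec (prodVec ψ) (star (prodVec ψ))))).re) ≤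
      ((2 : ℝ) ^ m)⁻¹ * (1 + ∑ S ∈ Finset.univ.filter
            (fun S : Finset (Fin m) => S.Nonempty),
        (Matrix.trace (reduce S ρ *
          reduce S (Matrix.vecMulVec (prodVec ψ) (star (prodVec ψ))))).re) ∧
    ((2 : ℝ) ^ m)⁻¹ * (1 + ∑ S ∈ Finset.univ.filter
            (fun S : Finset (Fin m) => S.Nonempty),
        (Matrix.trace (reduce S ρ *
          reduce S (Matrix.vecMulVec (prodVec ψ) (star (prodVec ψ))))).re) ≤
      ((2 : ℝ) ^ m)⁻¹ + ⨆ S : {S : Finset (Fin m) // S.Nonempty},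
        (Matrix.trace (reduce S.1 ρ *
          reduce S.1 (Matrix.vecMulVec (prodVec ψ) (star (prodVec ψ))))).re := by
  classical
  set v : (Fin m → Fin d) → ℂ := prodVec ψ with hv
  set σ : Matrix (Fin m → Fin d) (Fin m → Fin d) ℂ :=
    Matrix.vecMulVec v (star v) with hσ
  set t : Finset (Fin m) → ℝ :=
    fun S => (Matrix.trace (reduce S ρ * reduce S σ)).re with ht
  haveI : Nonempty (Fin m) := ⟨⟨0, hm⟩⟩
  -- Part 1
  have part1 : (Matrix.trace (swapTestAcceptProj m d * (ρ ⊗ₖ σ))).re =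
      ((2 : ℝ) ^ m)⁻¹ * ∑ S : Finset (Fin m), t S := by
    have e1 : Matrix.trace (swapTestAcceptProj m d * (ρ ⊗ₖ σ)) =
        ((2 : ℂ) ^ m)⁻¹ * ∑ S : Finset (Fin m),
          Matrix.trace (reduce S ρ * reduce S σ) := by
      rw [swapTestAcceptProj, smul_mul_assoc, Matrix.trace_smul, Finset.sum_mul,
        Matrix.trace_sum, smul_eq_mul]
      congr 1
      exact Finset.sum_congr rfl fun S _ => key S ρ v
    rw [e1]
    have e2 : ((2 : ℂ) ^ m)⁻¹ = ((((2 : ℝ) ^ m)⁻¹ : ℝ) : ℂ) := by push_cast; ring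
    rw [e2, Complex.re_ofReal_mul, Complex.re_sum]
  -- empty set term
  have hempty : t ∅ = 1 := by
    rw [ht]
    show (Matrix.trace (reduce ∅ ρ * reduce ∅ σ)).re = 1
    rw [trace_reduce_empty ρ σ]
    simp only [trace_reduce_empty ρ σ, hρ.2, one_mul, hσ, hv,
      trace_prodVec ψ hψ, Complex.one_re]
  -- sum splitting
  have hsplit : (∑ S : Finset (Fin m), t S) =
      1 + ∑ S ∈ Finset.univ.filter (fun S : Finset (Fin m) => S.Nonempty), t S := by
    have hf : Finset.univ.filter (fun S : Finset (Fin m) => ¬ S.Nonempty) = {∅} := by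
      ext S
      simp [Finset.not_nonempty_iff_eq_empty]
    have hs := Finset.sum_filter_add_sum_filter_not Finset.univ
      (fun S : Finset (Fin m) => S.Nonempty) t
    rw [hf, Finset.sum_singleton, hempty] at hs
    linarith [hs]
  -- sup facts
  have hnons : (Finset.univ : Finset (Fin m)).Nonempty := Finset.univ_nonempty
  haveI : Nonempty {S : Finset (Fin m) // S.Nonempty} := ⟨⟨Finset.univ, hnons⟩⟩
  set T : ℝ := ⨆ S : {S : Finset (Fin m) // S.Nonempty}, t S.1 with hT
  have hbdd : BddAbove (Set.range fun S : {S : Finset (Fin m) // S.Nonempty} => t S.1) :=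
    Set.Finite.bddAbove (Set.finite_range _)
  have hle : ∀ S : {S : Finset (Fin m) // S.Nonempty}, t S.1 ≤ T :=
    fun S => le_ciSup hbdd S
  have ht0 : ∀ S, 0 ≤ t S := fun S => trace_red_nonneg S ρ hρ.1 v
  have hT0 : 0 ≤ T := le_trans (ht0 Finset.univ) (hle ⟨Finset.univ, hnons⟩)
  have hcard : ((Finset.univ.filter (fun S : Finset (Fin m) => S.Nonempty)).card : ℝ)
      ≤ (2 : ℝ) ^ m := by
    have h1 : (Finset.univ.filter (fun S : Finset (Fin m) => S.Nonempty)).card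
        ≤ 2 ^ m := by
      refine le_trans (Finset.card_filter_le _ _) ?_
      simp [Finset.card_univ]
    exact_mod_cast h1
  have hsum : (∑ S ∈ Finset.univ.filter (fun S : Finset (Fin m) => S.Nonempty), t S)
      ≤ (2 : ℝ) ^ m * T := by
    refine le_trans (Finset.sum_le_card_nsmul _ _ T
      (fun S hS => hle ⟨S, (Finset.mem_filter.mp hS).2⟩)) ?_
    rw [nsmul_eq_mul]
    exact mul_le_mul_of_nonneg_right hcard hT0
  have hpow : (0:ℝ) < (2 : ℝ) ^ m := by positivity
  refine ⟨part1, le_of_eq (by rw [hsplit]), ?_⟩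
  rw [mul_add, mul_one]
  refine add_le_add_right ?_ _
  calc ((2 : ℝ) ^ m)⁻¹ * ∑ S ∈ Finset.univ.filter
        (fun S : Finset (Fin m) => S.Nonempty), t S
      ≤ ((2 : ℝ) ^ m)⁻¹ * ((2 : ℝ) ^ m * T) :=
        mul_le_mul_of_nonneg_left hsum (by positivity)
    _ = T := by
        rw [← mul_assoc, inv_mul_cancel₀ (ne_of_gt hpow), one_mul]
end
end

section
/- For any density operators ρ, σ, ξ on the same finite-dimensional Hilbert space, F(ρ,ξ) + F(σ,ξ) ≤ 1 + √F(ρ,σ). -/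
set_option linter.unusedSectionVars false

open Matrix
open scoped ComplexOrder Kronecker
noncomputable section

/-! ### Auxiliary lemmas -/

section Aux

variable {n : Type*} [Fintype n] [DecidableEq n]

open scoped MatrixOrder in
lemma matSqrt_of_psd {A : Matrix n n ℂ} (h : A.PosSemidef) : matSqrt A = CFC.sqrt A := by
  have h0 : (0 : Matrix n n ℂ) ≤ A := h.nonneg
  rw [CFC.sqrt_eq_real_sqrt A h0, cfcₙ_eq_cfc, h.1.cfc_eq, IsHermitian.cfc, Unitary.conjStarAlgAut_apply]
  unfold matSqrt
  rw [dif_pos h]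
  rfl

lemma matSqrt_posSemidef {A : Matrix n n ℂ} (h : A.PosSemidef) : (matSqrt A).PosSemidef := by
  open scoped MatrixOrder in
  rw [matSqrt_of_psd h]; exact (CFC.sqrt_nonneg A).posSemidef

lemma matSqrt_mul_self {A : Matrix n n ℂ} (h : A.PosSemidef) : matSqrt A * matSqrt A = A := by
  open scoped MatrixOrder in
  rw [matSqrt_of_psd h]; exact CFC.sqrt_mul_sqrt_self A h.nonneg

lemma matSqrt_eq {A P : Matrix n n ℂ} (h : A.PosSemidef) (hP : P.PosSemidef)
    (hsq : P * P = A) : matSqrt A = P := by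
  rw [matSqrt_of_psd h]
  open scoped MatrixOrder in
  exact CFC.sqrt_unique hsq hP.nonneg

/-- embedding of matrices into Euclidean space -/
def matE (M : Matrix n n ℂ) : EuclideanSpace ℂ (n × n) :=
  (WithLp.equiv 2 _).symm (fun p => M p.1 p.2)

lemma matE_inner (M N : Matrix n n ℂ) :
    (inner ℂ (matE M) (matE N) : ℂ) = Matrix.trace (Mᴴ * N) := by
  simp only [PiLp.inner_apply, RCLike.inner_apply', matE, WithLp.equiv_symm_apply, PiLp.toLp_apply,
    Matrix.trace, Matrix.diag, Matrix.mul_apply, Matrix.conjTranspose_apply]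
  rw [Fintype.sum_prod_type, Finset.sum_comm]
  simp only [starRingEnd_apply]

lemma vec_key {E : Type*} [NormedAddCommGroup E] [InnerProductSpace ℂ E]
    (u v w : E) (hu : ‖u‖ = 1) (hv : ‖v‖ = 1) (hw : ‖w‖ = 1) :
    ‖(inner ℂ u w : ℂ)‖ ^ 2 + ‖(inner ℂ v w : ℂ)‖ ^ 2
      ≤ 1 + ‖(inner ℂ u v : ℂ)‖ := by
  set a : ℂ := inner ℂ u w with ha
  set b : ℂ := inner ℂ v w with hb
  set t : ℝ := ‖(inner ℂ u v : ℂ)‖ with htd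
  set s : ℝ := ‖a‖ ^ 2 + ‖b‖ ^ 2 with hs
  have hs0 : 0 ≤ s := by positivity
  have ht0 : 0 ≤ t := norm_nonneg _
  set x : E := a • u + b • v with hx
  have hxw : (inner ℂ x w : ℂ) = (s : ℂ) := by
    simp only [hx, inner_add_left, inner_smul_left, ← ha, ← hb, hs]
    push_cast
    rw [mul_comm _ a, mul_comm _ b, Complex.mul_conj', Complex.mul_conj']
  have h1 : s ≤ ‖x‖ := by
    calc s = ‖((inner ℂ x w : ℂ))‖ := by
            rw [hxw, Complex.norm_real, Real.norm_eq_abs, abs_of_nonneg hs0]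
      _ = ‖(inner ℂ x w : ℂ)‖ := rfl
      _ ≤ ‖x‖ * ‖w‖ := norm_inner_le_norm _ _
      _ = ‖x‖ := by rw [hw, mul_one]
  have h2 : ‖x‖ ^ 2 ≤ s * (1 + t) := by
    have hns := @norm_add_sq ℂ _ _ _ _ (a • u) (b • v)
    have hre : RCLike.re (inner ℂ (a • u) (b • v) : ℂ) ≤ ‖a‖ * ‖b‖ * t := by
      have : (inner ℂ (a • u) (b • v) : ℂ) = (starRingEnd ℂ) a * (b * inner ℂ u v) := by
        rw [inner_smul_left, inner_smul_right]
      calc RCLike.re (inner ℂ (a • u) (b • v) : ℂ)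
          ≤ ‖(inner ℂ (a • u) (b • v) : ℂ)‖ := by
            exact Complex.re_le_norm _
        _ = ‖a‖ * ‖b‖ * t := by
            rw [this]; simp [_root_.map_mul, htd]; ring
    have hab : 2 * (‖a‖ * ‖b‖) ≤ s := by
      rw [hs]; nlinarith [sq_nonneg (‖a‖ - ‖b‖)]
    have h2' : ‖a • u‖ ^ 2 = ‖a‖ ^ 2 := by
      rw [norm_smul, hu, mul_one]
    have h2'' : ‖b • v‖ ^ 2 = ‖b‖ ^ 2 := by
      rw [norm_smul, hv, mul_one]
    rw [← hx] at hns
    rw [hns, h2', h2'']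
    nlinarith [norm_nonneg a, norm_nonneg b]
  have h3 : s ^ 2 ≤ s * (1 + t) := by
    calc s ^ 2 ≤ ‖x‖ ^ 2 := by nlinarith [norm_nonneg x]
      _ ≤ s * (1 + t) := h2
  rcases hs0.eq_or_lt with h | h
  · linarith
  · have := le_of_mul_le_mul_left (by nlinarith : s * s ≤ s * (1 + t)) h
    linarith [this]

lemma polar_decomp (X : Matrix n n ℂ) :
    ∃ U : Matrix n n ℂ, U ∈ Matrix.unitaryGroup n ℂ ∧ X = U * matSqrt (Xᴴ * X) := by
  have hXX : (Xᴴ * X).PosSemidef := posSemidef_conjTranspose_mul_self X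
  have hH := hXX.1
  set W : Matrix n n ℂ := (hH.eigenvectorUnitary : Matrix n n ℂ) with hWdef
  have hWu : W ∈ Matrix.unitaryGroup n ℂ := hH.eigenvectorUnitary.2
  have hW1 : Wᴴ * W = 1 := by
    rw [← star_eq_conjTranspose]; exact mem_unitaryGroup_iff'.mp hWu
  have hW1' : W * Wᴴ = 1 := by
    rw [← star_eq_conjTranspose]; exact mem_unitaryGroup_iff.mp hWu
  set d : n → ℝ := hH.eigenvalues with hd_def
  have hd : ∀ i, 0 ≤ d i := fun i => hXX.eigenvalues_nonneg i
  set D : Matrix n n ℂ := diagonal (fun i => (d i : ℂ)) with hD_def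
  set D' : Matrix n n ℂ := diagonal (fun i => (Real.sqrt (d i) : ℂ)) with hD'_def
  have hspec : Xᴴ * X = W * D * Wᴴ := by
    have h := hH.spectral_theorem
    rw [← star_eq_conjTranspose]
    exact h
  have hD'psd : D'.PosSemidef := by
    refine PosSemidef.diagonal fun i => ?_
    simp only [Pi.zero_apply]
    rw [Complex.zero_le_real]
    exact Real.sqrt_nonneg _
  have hD'2 : D' * D' = D := by
    have h : (fun i => ((Real.sqrt (d i) : ℂ)) * (Real.sqrt (d i) : ℂ)) = (fun i => (d i : ℂ)) :=
      funext fun i => by rw [← Complex.ofReal_mul, Real.mul_self_sqrt (hd i)]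
    rw [hD'_def, hD_def, diagonal_mul_diagonal, h]
  set P : Matrix n n ℂ := W * D' * Wᴴ with hP_def
  have hPpsd : P.PosSemidef := hD'psd.mul_mul_conjTranspose_same W
  have hP2 : P * P = Xᴴ * X := by
    rw [hspec, hP_def, ← hD'2]
    simp only [Matrix.mul_assoc]
    rw [← Matrix.mul_assoc Wᴴ W, hW1, Matrix.one_mul]
  have hPsqrt : matSqrt (Xᴴ * X) = P := matSqrt_eq hXX hPpsd hP2
  set Y : Matrix n n ℂ := X * W with hY_def
  have hYY : Yᴴ * Y = D := by
    rw [hY_def, conjTranspose_mul]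
    calc Wᴴ * Xᴴ * (X * W) = Wᴴ * (Xᴴ * X) * W := by
            simp only [Matrix.mul_assoc]
      _ = (Wᴴ * W) * D * (Wᴴ * W) := by rw [hspec]; simp only [Matrix.mul_assoc]
      _ = D := by rw [hW1]; simp
  -- columns of Y
  set y : n → EuclideanSpace ℂ n := fun i => (WithLp.equiv 2 _).symm (fun j => Y j i)
    with hy_def
  have hyy : ∀ i k, (inner ℂ (y i) (y k) : ℂ) = D i k := by
    intro i k
    rw [← hYY]
    simp only [PiLp.inner_apply, RCLike.inner_apply', hy_def, WithLp.equiv_symm_apply, PiLp.toLp_apply,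
      Matrix.mul_apply, Matrix.conjTranspose_apply, starRingEnd_apply]
  set v : n → EuclideanSpace ℂ n := fun i => (((Real.sqrt (d i) : ℂ))⁻¹ : ℂ) • y i with hv_def
  set s : Set n := {i | d i ≠ 0} with hs_def
  have horth : Orthonormal ℂ (s.restrict v) := by
    rw [orthonormal_iff_ite]
    rintro ⟨i, hi⟩ ⟨k, hk⟩
    change inner ℂ (v i) (v k) = _
    simp only [Set.restrict_apply, hv_def, inner_smul_left, inner_smul_right, hyy]
    rw [map_inv₀, Complex.conj_ofReal]
    by_cases h : i = k
    · subst h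
      simp only [Subtype.mk_eq_mk, if_pos rfl, hD_def, diagonal_apply_eq]
      have hdi : 0 < d i := lt_of_le_of_ne (hd i) (Ne.symm hi)
      have hsq : (Real.sqrt (d i) : ℂ) ≠ 0 := by
        simp only [ne_eq, Complex.ofReal_eq_zero]
        exact Real.sqrt_ne_zero'.mpr hdi
      field_simp
      rw [if_pos trivial, mul_one, ← Complex.ofReal_pow, Real.sq_sqrt (hd i)]
    · have : (⟨i, hi⟩ : s) ≠ ⟨k, hk⟩ := by simpa using h
      rw [if_neg this, hD_def, diagonal_apply_ne _ h]
      ring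
  obtain ⟨b, hb⟩ := horth.exists_orthonormalBasis_extension_of_card_eq
    (finrank_euclideanSpace (𝕜 := ℂ) (ι := n))
  set V : Matrix n n ℂ := Matrix.of (fun j i => b i j) with hV_def
  have hVu : V ∈ Matrix.unitaryGroup n ℂ := by
    rw [mem_unitaryGroup_iff', star_eq_conjTranspose]
    have hbo := orthonormal_iff_ite.mp b.orthonormal
    ext i k
    have hik := hbo i k
    rw [PiLp.inner_apply] at hik
    simp only [RCLike.inner_apply', starRingEnd_apply] at hik
    simp only [Matrix.mul_apply, Matrix.conjTranspose_apply, hV_def, Matrix.of_apply,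
      Matrix.one_apply]
    exact hik
  have hYV : Y = V * D' := by
    ext j i
    rw [hD'_def, Matrix.mul_diagonal]
    by_cases h : d i = 0
    · have hyi : ∀ j', Y j' i = 0 := by
        have h0 : ∑ j', Complex.normSq (Y j' i) = 0 := by
          have hii := congrArg (fun M => M i i) hYY
          simp only [hD_def, diagonal_apply_eq, Matrix.mul_apply,
            Matrix.conjTranspose_apply] at hii
          rw [h] at hii
          have hC : (∑ j', ((Complex.normSq (Y j' i) : ℝ) : ℂ)) = 0 := by
            rw [show ((0:ℝ):ℂ) = ((0:ℝ):ℂ) from rfl] at hii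
            push_cast at hii
            rw [← hii]
            refine Finset.sum_congr rfl fun j' _ => ?_
            rw [Complex.normSq_eq_conj_mul_self, starRingEnd_apply]
          exact_mod_cast hC
        intro j'
        have := (Finset.sum_eq_zero_iff_of_nonneg
          (fun m _ => Complex.normSq_nonneg (Y m i))).mp h0 j' (Finset.mem_univ _)
        exact Complex.normSq_eq_zero.mp this
      rw [hyi j, h]
      simp
    · have hbi : b i = v i := hb i h
      have : V j i = ((Real.sqrt (d i) : ℂ))⁻¹ * Y j i := by
        rw [hV_def]
        show b i j = _
        rw [hbi, hv_def]
        rfl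
      rw [this]
      have hsq : (Real.sqrt (d i) : ℂ) ≠ 0 := by
        simp only [ne_eq, Complex.ofReal_eq_zero]
        exact Real.sqrt_ne_zero'.mpr (lt_of_le_of_ne (hd i) (Ne.symm h))
      field_simp
  refine ⟨V * Wᴴ, ?_, ?_⟩
  · exact mul_mem hVu (Unitary.star_mem hWu : star W ∈ _)
  · rw [hPsqrt, hP_def]
    calc X = X * (W * Wᴴ) := by rw [hW1', Matrix.mul_one]
      _ = Y * Wᴴ := by rw [hY_def, Matrix.mul_assoc]
      _ = V * D' * Wᴴ := by rw [hYV]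
      _ = V * Wᴴ * (W * D' * Wᴴ) := by
          simp only [Matrix.mul_assoc]
          rw [← Matrix.mul_assoc Wᴴ W, hW1, Matrix.one_mul]

lemma trace_real_of_herm {A : Matrix n n ℂ} (h : A.IsHermitian) :
    ((Matrix.trace A).re : ℂ) = Matrix.trace A := by
  apply Complex.conj_eq_iff_re.mp
  have := Matrix.trace_conjTranspose A
  rw [h.eq] at this
  exact this.symm

lemma trace_psd_nonneg {A : Matrix n n ℂ} (h : A.PosSemidef) :
    0 ≤ (Matrix.trace A).re := by
  have hd : ∀ i, 0 ≤ A i i := by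
    intro i
    have h2 := h.2 (Finsupp.single i 1)
    simpa using h2
  have : (0:ℂ) ≤ Matrix.trace A := Finset.sum_nonneg fun i _ => hd i
  exact (Complex.le_def.mp this).1

lemma traceNorm_complex (X : Matrix n n ℂ) :
    ((traceNorm X : ℝ) : ℂ) = Matrix.trace (matSqrt (Xᴴ * X)) :=
  trace_real_of_herm (matSqrt_posSemidef (posSemidef_conjTranspose_mul_self X)).1

lemma traceNorm_nonneg (X : Matrix n n ℂ) : 0 ≤ traceNorm X :=
  trace_psd_nonneg (matSqrt_posSemidef (posSemidef_conjTranspose_mul_self X))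

lemma exists_unitary_trace (X : Matrix n n ℂ) :
    ∃ U ∈ Matrix.unitaryGroup n ℂ, Matrix.trace (U * X) = ((traceNorm X : ℝ) : ℂ) := by
  obtain ⟨U₀, hU₀, hX⟩ := polar_decomp X
  refine ⟨star U₀, Unitary.star_mem hU₀, ?_⟩
  rw [traceNorm_complex]
  conv_lhs => rw [hX]
  rw [← Matrix.mul_assoc, mem_unitaryGroup_iff'.mp hU₀, Matrix.one_mul]

lemma abs_trace_unitary_mul_le (X U : Matrix n n ℂ) (hU : U ∈ Matrix.unitaryGroup n ℂ) :
    ‖(Matrix.trace (U * X))‖ ≤ traceNorm X := by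
  obtain ⟨U₀, hU₀, hX⟩ := polar_decomp X
  set P : Matrix n n ℂ := matSqrt (Xᴴ * X) with hPdef
  have hPpsd : P.PosSemidef := matSqrt_posSemidef (posSemidef_conjTranspose_mul_self X)
  set Q : Matrix n n ℂ := matSqrt P with hQdef
  have hQpsd : Q.PosSemidef := matSqrt_posSemidef hPpsd
  have hQQ : Q * Q = P := matSqrt_mul_self hPpsd
  have hUU : U * U₀ ∈ Matrix.unitaryGroup n ℂ := mul_mem hU hU₀
  have hUU1 : (U * U₀)ᴴ * (U * U₀) = 1 := by
    rw [← star_eq_conjTranspose]; exact mem_unitaryGroup_iff'.mp hUU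
  set M : Matrix n n ℂ := Q * (U * U₀)ᴴ with hMdef
  have hMH : Mᴴ = (U * U₀) * Q := by
    rw [hMdef, conjTranspose_mul, conjTranspose_conjTranspose, hQpsd.1.eq]
  have htr : Matrix.trace (U * X) = (inner ℂ (matE M) (matE Q) : ℂ) := by
    rw [matE_inner, hMH, hX, ← Matrix.mul_assoc]
    rw [Matrix.mul_assoc (U * U₀) Q Q, hQQ]
  have hM2 : ‖matE M‖ ^ 2 = traceNorm X := by
    rw [← inner_self_eq_norm_sq (𝕜 := ℂ), matE_inner]
    have hMM : Mᴴ * M = (U * U₀) * P * (U * U₀)ᴴ := by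
      rw [hMH, hMdef, ← hQQ]
      simp only [Matrix.mul_assoc]
    rw [hMM, Matrix.trace_mul_comm, ← Matrix.mul_assoc, hUU1, Matrix.one_mul]
    have h := traceNorm_complex X
    rw [← hPdef] at h
    rw [← h]
    simp
  have hN2 : ‖matE Q‖ ^ 2 = traceNorm X := by
    rw [← inner_self_eq_norm_sq (𝕜 := ℂ), matE_inner, hQpsd.1.eq, hQQ]
    have h := traceNorm_complex X
    rw [← hPdef] at h
    rw [← h]
    simp
  have hCS : ‖(inner ℂ (matE M) (matE Q) : ℂ)‖ ≤ ‖matE M‖ * ‖matE Q‖ := by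
    exact norm_inner_le_norm _ _
  rw [htr]
  have h1 : (0:ℝ) ≤ ‖matE M‖ := norm_nonneg _
  have h2 : (0:ℝ) ≤ ‖matE Q‖ := norm_nonneg _
  nlinarith [traceNorm_nonneg X]

lemma fidelity_eq_sq_traceNorm {ρ ξ : Matrix n n ℂ} (hρ : ρ.PosSemidef) (hξ : ξ.PosSemidef) :
    fidelity ρ ξ = (traceNorm (matSqrt ρ * matSqrt ξ)) ^ 2 := by
  have h : matSqrt ξ * ρ * matSqrt ξ
      = (matSqrt ρ * matSqrt ξ)ᴴ * (matSqrt ρ * matSqrt ξ) := by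
    rw [conjTranspose_mul, (matSqrt_posSemidef hρ).1.eq, (matSqrt_posSemidef hξ).1.eq]
    calc matSqrt ξ * ρ * matSqrt ξ
        = matSqrt ξ * (matSqrt ρ * matSqrt ρ) * matSqrt ξ := by rw [matSqrt_mul_self hρ]
      _ = matSqrt ξ * matSqrt ρ * (matSqrt ρ * matSqrt ξ) := by
          simp only [Matrix.mul_assoc]
  rw [fidelity, traceNorm, h]

end Aux

/-- for any density operators ρ, σ, ξ,
F(ρ,ξ) + F(σ,ξ) ≤ 1 + √F(ρ,σ). -/
theorem fidelity_sum_le_one_add_sqrt_fidelity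
    {n : Type*} [Fintype n] [DecidableEq n] (ρ σ ξ : Matrix n n ℂ)
    (hρ : IsDensity ρ) (hσ : IsDensity σ) (hξ : IsDensity ξ) :
    fidelity ρ ξ + fidelity σ ξ ≤ 1 + Real.sqrt (fidelity ρ σ) := by
  obtain ⟨hρp, hρt⟩ := hρ
  obtain ⟨hσp, hσt⟩ := hσ
  obtain ⟨hξp, hξt⟩ := hξ
  set A : Matrix n n ℂ := matSqrt ρ with hA
  set B : Matrix n n ℂ := matSqrt σ with hB
  set C : Matrix n n ℂ := matSqrt ξ with hC
  obtain ⟨U₁, hU₁, hα⟩ := exists_unitary_trace (A * C)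
  obtain ⟨U₂, hU₂, hβ⟩ := exists_unitary_trace (B * C)
  have hU₁1 : U₁ᴴ * U₁ = 1 := by
    rw [← star_eq_conjTranspose]; exact mem_unitaryGroup_iff'.mp hU₁
  have hU₂1 : U₂ᴴ * U₂ = 1 := by
    rw [← star_eq_conjTranspose]; exact mem_unitaryGroup_iff'.mp hU₂
  set u : EuclideanSpace ℂ (n × n) := matE (A * U₁ᴴ) with hu_def
  set v : EuclideanSpace ℂ (n × n) := matE (B * U₂ᴴ) with hv_def
  set w : EuclideanSpace ℂ (n × n) := matE C with hw_def
  -- helper for unit norms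
  have norm_one : ∀ (M : Matrix n n ℂ), Matrix.trace (Mᴴ * M) = 1 → ‖matE M‖ = 1 := by
    intro M hM
    have h2 : ‖matE M‖ ^ 2 = 1 := by
      rw [← inner_self_eq_norm_sq (𝕜 := ℂ), matE_inner, hM]
      simp
    have h3 : ‖matE M‖ = Real.sqrt (‖matE M‖ ^ 2) := (Real.sqrt_sq (norm_nonneg _)).symm
    rw [h3, h2, Real.sqrt_one]
  have hAH : Aᴴ = A := (matSqrt_posSemidef hρp).1.eq
  have hBH : Bᴴ = B := (matSqrt_posSemidef hσp).1.eq
  have hCH : Cᴴ = C := (matSqrt_posSemidef hξp).1.eq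
  have hu1 : ‖u‖ = 1 := by
    apply norm_one
    have e1 : (A * U₁ᴴ)ᴴ * (A * U₁ᴴ) = U₁ * (ρ * U₁ᴴ) := by
      rw [conjTranspose_mul, conjTranspose_conjTranspose, hAH]
      calc U₁ * A * (A * U₁ᴴ) = U₁ * ((A * A) * U₁ᴴ) := by simp only [Matrix.mul_assoc]
        _ = U₁ * (ρ * U₁ᴴ) := by rw [matSqrt_mul_self hρp]
    rw [e1, Matrix.trace_mul_comm, Matrix.mul_assoc, hU₁1, Matrix.mul_one, hρt]
  have hv1 : ‖v‖ = 1 := by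
    apply norm_one
    have e1 : (B * U₂ᴴ)ᴴ * (B * U₂ᴴ) = U₂ * (σ * U₂ᴴ) := by
      rw [conjTranspose_mul, conjTranspose_conjTranspose, hBH]
      calc U₂ * B * (B * U₂ᴴ) = U₂ * ((B * B) * U₂ᴴ) := by simp only [Matrix.mul_assoc]
        _ = U₂ * (σ * U₂ᴴ) := by rw [matSqrt_mul_self hσp]
    rw [e1, Matrix.trace_mul_comm, Matrix.mul_assoc, hU₂1, Matrix.mul_one, hσt]
  have hw1 : ‖w‖ = 1 := by
    apply norm_one
    rw [hCH, matSqrt_mul_self hξp, hξt]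
  have key := vec_key u v w hu1 hv1 hw1
  have huw : (inner ℂ u w : ℂ) = ((traceNorm (A * C) : ℝ) : ℂ) := by
    rw [hu_def, hw_def, matE_inner, conjTranspose_mul, conjTranspose_conjTranspose, hAH,
      Matrix.mul_assoc]
    exact hα
  have hvw : (inner ℂ v w : ℂ) = ((traceNorm (B * C) : ℝ) : ℂ) := by
    rw [hv_def, hw_def, matE_inner, conjTranspose_mul, conjTranspose_conjTranspose, hBH,
      Matrix.mul_assoc]
    exact hβ
  have habs_uw : ‖(inner ℂ u w : ℂ)‖ = traceNorm (A * C) := by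
    rw [huw, Complex.norm_real, Real.norm_eq_abs, abs_of_nonneg (traceNorm_nonneg _)]
  have habs_vw : ‖(inner ℂ v w : ℂ)‖ = traceNorm (B * C) := by
    rw [hvw, Complex.norm_real, Real.norm_eq_abs, abs_of_nonneg (traceNorm_nonneg _)]
  have hUU : U₂ᴴ * U₁ ∈ Matrix.unitaryGroup n ℂ := by
    rw [← star_eq_conjTranspose]
    exact mul_mem (Unitary.star_mem hU₂) hU₁
  have huv : ‖(inner ℂ u v : ℂ)‖ ≤ traceNorm (A * B) := by
    have e : (inner ℂ u v : ℂ) = Matrix.trace ((U₂ᴴ * U₁) * (A * B)) := by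
      rw [hu_def, hv_def, matE_inner, conjTranspose_mul, conjTranspose_conjTranspose, hAH]
      have h1 : (U₁ * A) * (B * U₂ᴴ) = U₁ * ((A * B) * U₂ᴴ) := by
        simp only [Matrix.mul_assoc]
      rw [h1, Matrix.trace_mul_comm, Matrix.mul_assoc, Matrix.trace_mul_comm]
    rw [e]
    exact abs_trace_unitary_mul_le (A * B) _ hUU
  have hFρξ : fidelity ρ ξ = traceNorm (A * C) ^ 2 := fidelity_eq_sq_traceNorm hρp hξp
  have hFσξ : fidelity σ ξ = traceNorm (B * C) ^ 2 := fidelity_eq_sq_traceNorm hσp hξp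
  have hFρσ : Real.sqrt (fidelity ρ σ) = traceNorm (A * B) := by
    rw [fidelity_eq_sq_traceNorm hρp hσp, Real.sqrt_sq (traceNorm_nonneg _)]
  rw [hFρξ, hFσξ, hFρσ]
  rw [habs_uw, habs_vw] at key
  linarith
end
end

section
/- Let P and Π̃ be orthogonal projections on a finite-dimensional Hilbert space and |φ⟩ a unit vector with ‖P(I − Π̃)|φ⟩‖ ≤ η. Then for every projection Q, | ‖QP|φ⟩‖² − ‖QPΠ̃|φ⟩‖² | ≤ 2η, and consequently the trace distance between the subnormalized post-measurement states Tr_E(P|φ⟩⟨φ|P) and Tr_E(PΠ̃|φ⟩⟨φ|Π̃P) (for any partial trace Tr_E) is at most 3η. -/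
open Matrix
open scoped ComplexOrder Kronecker
noncomputable section

/-- Partial trace over the register E of an operator on W ⊗ E. -/
noncomputable def ptrE {W E : Type*} [Fintype W] [Fintype E]
    (M : Matrix (W × E) (W × E) ℂ) : Matrix W W ℂ :=
  Matrix.of fun w w' => ∑ e, M (w, e) (w', e)


set_option linter.unusedSectionVars false
section Helpers
variable {n : Type*} [Fintype n] [DecidableEq n]

/-- Squared ℓ² norm of a complex vector. -/
noncomputable def nsq (x : n → ℂ) : ℝ := ∑ p, ‖x p‖ ^ 2

lemma nsq_nonneg (x : n → ℂ) : 0 ≤ nsq x :=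
  Finset.sum_nonneg fun _ _ => by positivity

lemma dot_self_eq_nsq (x : n → ℂ) : star x ⬝ᵥ x = (nsq x : ℂ) := by
  simp only [dotProduct, Pi.star_apply, nsq, Complex.ofReal_sum]
  exact Finset.sum_congr rfl fun i _ => by
    rw [Complex.star_def, RCLike.conj_mul]; norm_num

lemma proj_dot (Q : Matrix n n ℂ) (hQ : Q.IsHermitian) (hQQ : Q * Q = Q) (x : n → ℂ) :
    star x ⬝ᵥ (Q *ᵥ x) = (nsq (Q *ᵥ x) : ℂ) := by
  have h1 : star (Q *ᵥ x) = star x ᵥ* Q := by rw [star_mulVec, hQ.eq]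
  have h2 : star x ⬝ᵥ (Q *ᵥ x) = star (Q *ᵥ x) ⬝ᵥ (Q *ᵥ x) := by
    conv_lhs => rw [← hQQ, ← mulVec_mulVec, dotProduct_mulVec]
    rw [h1]
  rw [h2, dot_self_eq_nsq]

lemma proj_nsq_le (Q : Matrix n n ℂ) (hQ : Q.IsHermitian) (hQQ : Q * Q = Q) (x : n → ℂ) :
    nsq (Q *ᵥ x) ≤ nsq x := by
  have hR : (1 - Q).IsHermitian := by
    unfold Matrix.IsHermitian at *
    rw [conjTranspose_sub, conjTranspose_one, hQ]
  have hRR : (1 - Q) * (1 - Q) = 1 - Q := by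
    simp [Matrix.sub_mul, Matrix.mul_sub, hQQ]
  have key : (nsq x : ℂ) = (nsq (Q *ᵥ x) : ℂ) + (nsq ((1 - Q) *ᵥ x) : ℂ) := by
    rw [← dot_self_eq_nsq, ← proj_dot Q hQ hQQ, ← proj_dot _ hR hRR]
    rw [← dotProduct_add]
    congr 1
    rw [← add_mulVec]
    norm_num
  have : nsq x = nsq (Q *ᵥ x) + nsq ((1 - Q) *ᵥ x) := by
    exact_mod_cast key
  linarith [nsq_nonneg ((1 - Q) *ᵥ x)]

/-- ℓ² norm via EuclideanSpace. -/
lemma nsq_eq_norm_sq (x : n → ℂ) :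
    nsq x = ‖((WithLp.equiv 2 (n → ℂ)).symm x)‖ ^ 2 := by
  rw [EuclideanSpace.norm_eq, Real.sq_sqrt (Finset.sum_nonneg fun _ _ => by positivity)]
  rfl

end Helpers

section Part1
variable {n : Type*} [Fintype n] [DecidableEq n]

lemma sqrt_nsq_le_one {x : n → ℂ} (h : nsq x ≤ 1) :
    ‖((WithLp.equiv 2 (n → ℂ)).symm x)‖ ≤ 1 := by
  have h2 := nsq_eq_norm_sq x
  nlinarith [norm_nonneg ((WithLp.equiv 2 (n → ℂ)).symm x)]

lemma part1_bound (P Pt Q : Matrix n n ℂ)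
    (hP : P.IsHermitian) (hPP : P * P = P)
    (hPt : Pt.IsHermitian) (hPtPt : Pt * Pt = Pt)
    (hQ : Q.IsHermitian) (hQQ : Q * Q = Q)
    (φ : n → ℂ) (hφ : nsq φ = 1) (η : ℝ)
    (hη : nsq ((P * (1 - Pt)) *ᵥ φ) ≤ η ^ 2) (hη0 : 0 ≤ η) :
    |nsq (Q *ᵥ (P *ᵥ φ)) - nsq (Q *ᵥ ((P * Pt) *ᵥ φ))| ≤ 2 * η := by
  set u := P *ᵥ φ with hu
  set v := (P * Pt) *ᵥ φ with hv
  have hd : u - v = (P * (1 - Pt)) *ᵥ φ := by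
    rw [Matrix.mul_sub, Matrix.mul_one, Matrix.sub_mulVec]
  set d := u - v with hdd
  -- embeddings
  set a := ‖((WithLp.equiv 2 (n → ℂ)).symm (Q *ᵥ u))‖ with ha
  set b := ‖((WithLp.equiv 2 (n → ℂ)).symm (Q *ᵥ v))‖ with hb
  have ha2 : nsq (Q *ᵥ u) = a ^ 2 := nsq_eq_norm_sq _
  have hb2 : nsq (Q *ᵥ v) = b ^ 2 := nsq_eq_norm_sq _
  have hu1 : nsq u ≤ 1 := hφ ▸ proj_nsq_le P hP hPP φ
  have hv1 : nsq v ≤ 1 := by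
    have : v = P *ᵥ (Pt *ᵥ φ) := by rw [hv, mulVec_mulVec]
    rw [this]
    calc nsq (P *ᵥ (Pt *ᵥ φ)) ≤ nsq (Pt *ᵥ φ) := proj_nsq_le P hP hPP _
      _ ≤ nsq φ := proj_nsq_le Pt hPt hPtPt _
      _ = 1 := hφ
  have haa : a ≤ 1 := sqrt_nsq_le_one (le_trans (proj_nsq_le Q hQ hQQ u) hu1)
  have hbb : b ≤ 1 := sqrt_nsq_le_one (le_trans (proj_nsq_le Q hQ hQQ v) hv1)
  have hdn : ‖((WithLp.equiv 2 (n → ℂ)).symm (Q *ᵥ d))‖ ≤ η := by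
    have h1 : nsq (Q *ᵥ d) ≤ η ^ 2 := le_trans (proj_nsq_le Q hQ hQQ d) (hd ▸ hη)
    have h2 := nsq_eq_norm_sq (Q *ᵥ d)
    nlinarith [norm_nonneg ((WithLp.equiv 2 (n → ℂ)).symm (Q *ᵥ d))]
  have hab : |a - b| ≤ η := by
    have h3 : ((WithLp.equiv 2 (n → ℂ)).symm (Q *ᵥ u))
        - ((WithLp.equiv 2 (n → ℂ)).symm (Q *ᵥ v))
        = ((WithLp.equiv 2 (n → ℂ)).symm (Q *ᵥ d)) := by
      rw [hdd, Matrix.mulVec_sub]; rfl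
    calc |a - b| ≤ ‖((WithLp.equiv 2 (n → ℂ)).symm (Q *ᵥ u))
        - ((WithLp.equiv 2 (n → ℂ)).symm (Q *ᵥ v))‖ := abs_norm_sub_norm_le _ _
      _ ≤ η := by rw [h3]; exact hdn
  rw [ha2, hb2]
  have h4 : a ^ 2 - b ^ 2 = (a - b) * (a + b) := by ring
  rw [h4, abs_mul]
  have h5 : |a + b| ≤ 2 := by
    rw [abs_of_nonneg (by positivity)]; linarith
  calc |a - b| * |a + b| ≤ η * 2 := by
        apply mul_le_mul hab h5 (abs_nonneg _) hη0
    _ = 2 * η := by ring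

end Part1

section Part2
variable {W E : Type*} [Fintype W] [DecidableEq W] [Fintype E] [DecidableEq E]

lemma trace_mul_vecMulVec {n : Type*} [Fintype n] (A : Matrix n n ℂ) (x y : n → ℂ) :
    Matrix.trace (A * vecMulVec x y) = y ⬝ᵥ (A *ᵥ x) := by
  simp only [Matrix.trace, Matrix.diag, Matrix.mul_apply, vecMulVec_apply, dotProduct,
    Matrix.mulVec, Finset.mul_sum]
  exact Finset.sum_congr rfl fun i _ => Finset.sum_congr rfl fun j _ => by ring

lemma trace_ptrE (Q : Matrix W W ℂ) (M : Matrix (W × E) (W × E) ℂ) :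
    Matrix.trace (Q * ptrE M) = Matrix.trace ((Q ⊗ₖ (1 : Matrix E E ℂ)) * M) := by
  simp only [Matrix.trace, Matrix.diag, Matrix.mul_apply, ptrE, Matrix.of_apply,
    kroneckerMap_apply, Matrix.one_apply, Fintype.sum_prod_type, Finset.mul_sum]
  apply Finset.sum_congr rfl; intro w _
  rw [Finset.sum_comm]
  apply Finset.sum_congr rfl; intro e _
  apply Finset.sum_congr rfl; intro w' _
  simp [mul_ite, ite_mul, Finset.sum_ite_eq, Finset.mul_sum]

lemma kron_one_herm {Q : Matrix W W ℂ} (hQ : Q.IsHermitian) :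
    (Q ⊗ₖ (1 : Matrix E E ℂ)).IsHermitian := by
  ext ⟨w, e⟩ ⟨w', e'⟩
  simp only [conjTranspose_apply, kroneckerMap_apply, Matrix.one_apply, star_mul']
  by_cases h : e = e'
  · subst h; simp [← conjTranspose_apply, hQ.eq]
  · rw [if_neg h, if_neg (fun hh : e' = e => h hh.symm)]; simp

lemma kron_one_idem {Q : Matrix W W ℂ} (hQQ : Q * Q = Q) :
    (Q ⊗ₖ (1 : Matrix E E ℂ)) * (Q ⊗ₖ (1 : Matrix E E ℂ)) = Q ⊗ₖ (1 : Matrix E E ℂ) := by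
  rw [← Matrix.mul_kronecker_mul, hQQ, Matrix.one_mul]

lemma ptrE_herm (x : W × E → ℂ) : (ptrE (vecMulVec x (star x))).IsHermitian := by
  ext w w'
  simp only [conjTranspose_apply, ptrE, Matrix.of_apply, vecMulVec_apply, Pi.star_apply,
    star_sum, star_mul', star_star]
  exact Finset.sum_congr rfl fun e _ => by ring

end Part2

section Spectral
variable {n : Type*} [Fintype n] [DecidableEq n]

lemma conj_unitary_mul (U : Matrix n n ℂ) (hU : star U * U = 1) (a b : n → ℂ) :
    (U * diagonal a * star U) * (U * diagonal b * star U)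
      = U * diagonal (fun i => a i * b i) * star U := by
  have h1 : star U * (U * (diagonal b * star U)) = diagonal b * star U := by
    rw [← Matrix.mul_assoc, hU, Matrix.one_mul]
  calc (U * diagonal a * star U) * (U * diagonal b * star U)
      = U * (diagonal a * (star U * (U * (diagonal b * star U)))) := by
        simp only [Matrix.mul_assoc]
    _ = U * (diagonal a * (diagonal b * star U)) := by rw [h1]
    _ = U * (diagonal a * diagonal b * star U) := by rw [Matrix.mul_assoc (diagonal a)]
    _ = U * diagonal (fun i => a i * b i) * star U := by
        rw [diagonal_mul_diagonal, Matrix.mul_assoc]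

lemma trace_conj_unitary (U : Matrix n n ℂ) (hU : star U * U = 1) (a : n → ℂ) :
    Matrix.trace (U * diagonal a * star U) = ∑ i, a i := by
  rw [Matrix.trace_mul_comm, ← Matrix.mul_assoc, hU, Matrix.one_mul, Matrix.trace_diagonal]

lemma conj_unitary_herm (U : Matrix n n ℂ) (a : n → ℝ) :
    (U * diagonal (fun i => (a i : ℂ)) * star U).IsHermitian := by
  unfold Matrix.IsHermitian
  rw [conjTranspose_mul, conjTranspose_mul, diagonal_conjTranspose]
  rw [Matrix.star_eq_conjTranspose, conjTranspose_conjTranspose, Matrix.mul_assoc]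
  congr 1
  funext i
  simp [Pi.star_def]

lemma traceNorm_herm (Δ : Matrix n n ℂ) (hΔ : Δ.IsHermitian) :
    traceNorm Δ = ∑ i, |hΔ.eigenvalues i| := by
  set U : Matrix n n ℂ := (hΔ.eigenvectorUnitary : Matrix n n ℂ) with hUdef
  have hU : star U * U = 1 := Matrix.mem_unitaryGroup_iff'.mp hΔ.eigenvectorUnitary.2
  set lam := hΔ.eigenvalues with hlam
  have hspec : Δ = U * diagonal (fun i => (lam i : ℂ)) * star U := by
    have := hΔ.spectral_theorem
    rw [Unitary.conjStarAlgAut_apply] at this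
    exact this
  set S : Matrix n n ℂ := U * diagonal (fun i => ((|lam i| : ℝ) : ℂ)) * star U with hS
  have hSpsd : S.PosSemidef := by
    rw [hS, Matrix.star_eq_conjTranspose]
    exact Matrix.PosSemidef.mul_mul_conjTranspose_same
      (Matrix.posSemidef_diagonal_iff.mpr fun i => by
        rw [Complex.zero_le_real]; exact abs_nonneg _) U
  have hPSD : (Δᴴ * Δ).PosSemidef := Matrix.posSemidef_conjTranspose_mul_self Δ
  have hSsq : S ^ 2 = Δᴴ * Δ := by
    rw [sq, hS, conj_unitary_mul U hU, hΔ.eq]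
    conv_rhs => rw [hspec]
    rw [conj_unitary_mul U hU]
    have hff : (fun i => ((|lam i| : ℝ) : ℂ) * ((|lam i| : ℝ) : ℂ))
        = (fun i => ((lam i : ℝ) : ℂ) * ((lam i : ℝ) : ℂ)) := by
      funext i
      rw [← Complex.ofReal_mul, ← Complex.ofReal_mul, abs_mul_abs_self]
    rw [hff]
  have hSqrt : matSqrt (Δᴴ * Δ) = S := by
    rw [matSqrt, dif_pos hPSD]
    have e1 := hPSD.1.cfc_eq Real.sqrt
    rw [IsHermitian.cfc, Unitary.conjStarAlgAut_apply] at e1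
    have e2 := hΔ.cfc_eq (fun x => |x|)
    rw [IsHermitian.cfc, Unitary.conjStarAlgAut_apply] at e2
    have e4 : cfc (fun x : ℝ => |x|) Δ = cfc Real.sqrt (Δᴴ * Δ) := by
      rw [hΔ.eq, ← sq]
      refine Eq.trans ?_ (cfc_comp_pow (R := ℝ) Real.sqrt 2 Δ (ha := (hΔ : IsSelfAdjoint Δ)))
      congr 1; funext x; exact (Real.sqrt_sq_eq_abs x).symm
    calc _ = cfc Real.sqrt (Δᴴ * Δ) := e1.symm
      _ = S := by rw [← e4]; exact e2
  rw [traceNorm, hSqrt, hS, trace_conj_unitary U hU]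
  rw [← Complex.ofReal_sum]
  simp

lemma traceNorm_herm_le (Δ : Matrix n n ℂ) (hΔ : Δ.IsHermitian) (C : ℝ)
    (hC : ∀ Q : Matrix n n ℂ, Q.IsHermitian → Q * Q = Q →
      |(Matrix.trace (Q * Δ)).re| ≤ C) :
    traceNorm Δ ≤ 2 * C := by
  set U : Matrix n n ℂ := (hΔ.eigenvectorUnitary : Matrix n n ℂ) with hUdef
  have hU : star U * U = 1 := Matrix.mem_unitaryGroup_iff'.mp hΔ.eigenvectorUnitary.2
  set lam := hΔ.eigenvalues with hlam
  have hspec : Δ = U * diagonal (fun i => (lam i : ℂ)) * star U := by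
    have := hΔ.spectral_theorem
    rw [Unitary.conjStarAlgAut_apply] at this
    exact this
  -- the two spectral projections
  have key : ∀ g : n → ℝ, (∀ i, g i = 0 ∨ g i = 1) →
      |∑ i, g i * lam i| ≤ C := by
    intro g hg
    set Q : Matrix n n ℂ := U * diagonal (fun i => ((g i : ℝ) : ℂ)) * star U with hQdef
    have hQH : Q.IsHermitian := conj_unitary_herm U g
    have hQQ : Q * Q = Q := by
      rw [hQdef, conj_unitary_mul U hU]
      have hff : (fun i => ((g i : ℝ) : ℂ) * ((g i : ℝ) : ℂ))
          = fun i => ((g i : ℝ) : ℂ) := by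
        funext i
        rcases hg i with h | h <;> simp [h]
      rw [hff]
    have htr : Matrix.trace (Q * Δ) = ((∑ i, g i * lam i : ℝ) : ℂ) := by
      conv_lhs => rw [hQdef, hspec, conj_unitary_mul U hU]
      rw [trace_conj_unitary U hU]
      push_cast
      rfl
    have := hC Q hQH hQQ
    rwa [htr, Complex.ofReal_re] at this
  have h1 := key (fun i => if 0 ≤ lam i then 1 else 0)
    (fun i => by by_cases h : 0 ≤ lam i <;> simp [h])
  have h2 := key (fun i => if 0 ≤ lam i then 0 else 1)
    (fun i => by by_cases h : 0 ≤ lam i <;> simp [h])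
  rw [traceNorm_herm Δ hΔ]
  have habs : ∑ i, |lam i| = (∑ i, (if 0 ≤ lam i then 1 else 0) * lam i)
      - ∑ i, (if 0 ≤ lam i then 0 else 1) * lam i := by
    rw [← Finset.sum_sub_distrib]
    apply Finset.sum_congr rfl
    intro i _
    by_cases h : 0 ≤ lam i
    · rw [abs_of_nonneg h]; simp [h]
    · rw [abs_of_neg (lt_of_not_ge h)]; simp [h]
  rw [habs]
  have := abs_le.mp h1
  have := abs_le.mp h2
  linarith [(abs_le.mp h1).1, (abs_le.mp h1).2, (abs_le.mp h2).1, (abs_le.mp h2).2]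

end Spectral

/-- if P, Π̃ are projections and |φ⟩ a unit vector with
‖P(I − Π̃)|φ⟩‖ ≤ η, then for every projection Q,
|‖QP|φ⟩‖² − ‖QPΠ̃|φ⟩‖²| ≤ 2η, and the trace distance between the
subnormalized post-measurement states Tr_E(P|φ⟩⟨φ|P) and
Tr_E(PΠ̃|φ⟩⟨φ|Π̃P) is at most 3η. -/
theorem projection_perturbation_bound
    {W E : Type*} [Fintype W] [DecidableEq W] [Fintype E] [DecidableEq E]
    (P Pt : Matrix (W × E) (W × E) ℂ)
    (hP : P.IsHermitian) (hPP : P * P = P)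
    (hPt : Pt.IsHermitian) (hPtPt : Pt * Pt = Pt)
    (φ : W × E → ℂ) (hφ : ∑ p, ‖φ p‖ ^ 2 = 1)
    (η : ℝ)
    (hη : ∑ p, ‖((P * ((1 : Matrix (W × E) (W × E) ℂ) - Pt)).mulVec φ) p‖ ^ 2 ≤
      η ^ 2) (hη0 : 0 ≤ η) :
    (∀ Q : Matrix (W × E) (W × E) ℂ, Q.IsHermitian → Q * Q = Q →
      |∑ p, ‖((Q * P).mulVec φ) p‖ ^ 2 -
        ∑ p, ‖((Q * P * Pt).mulVec φ) p‖ ^ 2| ≤ 2 * η) ∧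
    TD (ptrE (Matrix.vecMulVec (P.mulVec φ) (star (P.mulVec φ))))
       (ptrE (Matrix.vecMulVec ((P * Pt).mulVec φ)
          (star ((P * Pt).mulVec φ)))) ≤ 3 * η := by
  classical
  have hφ' : nsq φ = 1 := hφ
  have hη' : nsq ((P * (1 - Pt)) *ᵥ φ) ≤ η ^ 2 := hη
  have part1 : ∀ Q : Matrix (W × E) (W × E) ℂ, Q.IsHermitian → Q * Q = Q →
      |∑ p, ‖((Q * P).mulVec φ) p‖ ^ 2 -
        ∑ p, ‖((Q * P * Pt).mulVec φ) p‖ ^ 2| ≤ 2 * η := by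
    intro Q hQ hQQ
    have h := part1_bound P Pt Q hP hPP hPt hPtPt hQ hQQ φ hφ' η hη' hη0
    have e1 : (Q * P) *ᵥ φ = Q *ᵥ (P *ᵥ φ) := (mulVec_mulVec φ Q P).symm
    have e2 : (Q * P * Pt) *ᵥ φ = Q *ᵥ ((P * Pt) *ᵥ φ) := by
      rw [Matrix.mul_assoc, ← mulVec_mulVec]
    rw [show ((Q * P).mulVec φ) = Q *ᵥ (P *ᵥ φ) from e1,
      show ((Q * P * Pt).mulVec φ) = Q *ᵥ ((P * Pt) *ᵥ φ) from e2]
    exact h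
  refine ⟨part1, ?_⟩
  set u := P *ᵥ φ with hu
  set v := (P * Pt) *ᵥ φ with hv
  set ρ := ptrE (vecMulVec u (star u)) with hρ
  set σ := ptrE (vecMulVec v (star v)) with hσ
  have hΔ : (ρ - σ).IsHermitian := (ptrE_herm u).sub (ptrE_herm v)
  have hC : ∀ Q : Matrix W W ℂ, Q.IsHermitian → Q * Q = Q →
      |(Matrix.trace (Q * (ρ - σ))).re| ≤ 2 * η := by
    intro Q hQ hQQ
    have hQ'H := kron_one_herm (E := E) hQ
    have hQ'Q' := kron_one_idem (E := E) hQQ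
    set Q' := Q ⊗ₖ (1 : Matrix E E ℂ) with hQ'
    have t1 : Matrix.trace (Q * ρ) = (nsq (Q' *ᵥ u) : ℂ) := by
      rw [hρ, trace_ptrE, trace_mul_vecMulVec, proj_dot Q' hQ'H hQ'Q']
    have t2 : Matrix.trace (Q * σ) = (nsq (Q' *ᵥ v) : ℂ) := by
      rw [hσ, trace_ptrE, trace_mul_vecMulVec, proj_dot Q' hQ'H hQ'Q']
    have t3 : Matrix.trace (Q * (ρ - σ)) = ((nsq (Q' *ᵥ u) - nsq (Q' *ᵥ v) : ℝ) : ℂ) := by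
      rw [Matrix.mul_sub, Matrix.trace_sub, t1, t2]
      push_cast
      ring
    rw [t3, Complex.ofReal_re]
    exact part1_bound P Pt Q' hP hPP hPt hPtPt hQ'H hQ'Q' φ hφ' η hη' hη0
  have hTN : traceNorm (ρ - σ) ≤ 2 * (2 * η) := traceNorm_herm_le _ hΔ _ hC
  show TD ρ σ ≤ 3 * η
  rw [TD]
  linarith
end
end
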